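/- arXiv:1402.6986 — 4 statements merged into one kernel-verified Lean document; each statement's English description precedes it below -/
import Mathlib

section
/- The graph of the sigmoid s̃_δ(x) = 2/(1 + e^{-x/δ}) - 1 is contained in any prescribed ε-neighborhood of the graph of the set-valued signum Sgn provided δ is sufficiently small: for every ε > 0 there exists δ₀ > 0 such that for all 0 < δ < δ₀ and all x ∈ ℝ, there exist x' ∈ ℝ and y' ∈ Sgn(x') with |x - x'| + |s̃_δ(x) - y'| < ε. -/
/-- The set-valued signum function. -/
noncomputable def Sgn (x : ℝ) : Set ℝ :=
  if x < 0 then {-1} else if x = 0 then Set.Icc (-1) 1 else {1}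

theorem sigmoid_graph_approx_Sgn :
    ∀ ε : ℝ, 0 < ε → ∃ δ₀ : ℝ, 0 < δ₀ ∧ ∀ δ : ℝ, 0 < δ → δ < δ₀ → ∀ x : ℝ,
      ∃ x' y' : ℝ, y' ∈ Sgn x' ∧ |x - x'| + |(2 / (1 + Real.exp (-x / δ)) - 1) - y'| < ε := by
  intro ε hε
  refine ⟨ε ^ 2 / 4, by positivity, fun δ hδ hδ₀ x => ?_⟩
  set E := Real.exp (-x / δ) with hEdef
  have hE : 0 < E := Real.exp_pos _
  have h1E : (0:ℝ) < 1 + E := by linarith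
  have hlt2 : 2 / (1 + E) < 2 := by
    rw [div_lt_iff₀ h1E]; nlinarith
  have hgt0 : 0 < 2 / (1 + E) := by positivity
  by_cases hx : |x| < ε / 2
  · -- use x' = 0, y' = sigmoid value
    refine ⟨0, 2 / (1 + E) - 1, ?_, ?_⟩
    · simp only [Sgn, lt_irrefl, if_false, if_true, if_neg (lt_irrefl (0:ℝ)), if_pos rfl]
      exact ⟨by linarith, by linarith⟩
    · have hxε : |x| < ε := by linarith
      simpa using hxε
  · push_neg at hx
    rcases abs_le'.mp (le_refl |x|) with ⟨h1, h2⟩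
    rcases le_or_gt (ε / 2) x with hxp | hxn
    · -- x ≥ ε/2 > 0, use y' = 1
      have hx0 : 0 < x := by linarith
      have hexp : x / δ ≤ Real.exp (x / δ) := by
        have := Real.add_one_le_exp (x / δ); linarith
      have hxd : 0 < x / δ := by positivity
      have hEle : E ≤ δ / x := by
        have : E = (Real.exp (x / δ))⁻¹ := by
          rw [hEdef, ← Real.exp_neg]; ring_nf
        rw [this]
        have h1 : (Real.exp (x / δ))⁻¹ ≤ (x / δ)⁻¹ :=
          inv_anti₀ hxd hexp
        have h2 : (x / δ)⁻¹ = δ / x := by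
          field_simp
        linarith [h1, h2.le, h2.ge]
      have hkey : 2 - 2 * E ≤ 2 / (1 + E) := by
        rw [le_div_iff₀ h1E]; nlinarith
      have hchain : 2 * E < ε := by
        have h3 : 2 * (δ / x) ≤ 4 * δ / ε := by
          rw [le_div_iff₀ hε]
          rw [show 2 * (δ / x) * ε = (2 * δ * ε) / x by ring, div_le_iff₀ hx0]
          nlinarith
        have h4 : 4 * δ / ε < ε := by
          rw [div_lt_iff₀ hε]; nlinarith
        linarith
      refine ⟨x, 1, ?_, ?_⟩
      · simp [Sgn, not_lt.mpr hx0.le, hx0.ne']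
      · have habs : |2 / (1 + E) - 1 - 1| = 2 - 2 / (1 + E) := by
          rw [abs_of_nonpos (by linarith)]; ring
        rw [sub_self, abs_zero, zero_add, habs]
        linarith
    · -- x ≤ -ε/2 < 0, use y' = -1
      have hxle : x ≤ -(ε / 2) := by
        rcases abs_cases x with ⟨h, _⟩ | ⟨h, _⟩ <;> linarith
      have hx0 : x < 0 := by linarith
      have hxd : 0 < -x / δ := by
        apply div_pos <;> linarith
      have hexp : -x / δ ≤ E := by
        have := Real.add_one_le_exp (-x / δ); rw [hEdef]; linarith
      have hEle : 2 / (1 + E) ≤ 2 * δ / (-x) := by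
        have hE1 : -x / δ ≤ 1 + E := by linarith
        rw [div_le_div_iff₀ h1E (by linarith : (0:ℝ) < -x)]
        have : (-x / δ) * δ = -x := by field_simp
        nlinarith
      have hchain : 2 * δ / (-x) < ε := by
        have h3 : 2 * δ / (-x) ≤ 4 * δ / ε := by
          rw [div_le_div_iff₀ (by linarith : (0:ℝ) < -x) hε]; nlinarith
        have h4 : 4 * δ / ε < ε := by
          rw [div_lt_iff₀ hε]; nlinarith
        linarith
      refine ⟨x, -1, ?_, ?_⟩
      · simp [Sgn, hx0]
      · have habs : |2 / (1 + E) - 1 - (-1)| = 2 / (1 + E) := by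
          rw [abs_of_nonneg (by linarith)]; ring
        rw [sub_self, abs_zero, zero_add, habs]
        linarith
end

section
/- The matrix E = [[0,1,0],[0,0,1],[-1,-1,-2]] has characteristic polynomial λ³ + 2λ² + λ + 1, one real eigenvalue λ₁ ∈ (-2, -1.7), and a pair of complex conjugate eigenvalues with negative real part; in particular all eigenvalues λ of E satisfy |arg(λ)| > 0.92·π/2. -/
open Polynomial

theorem sprott_error_matrix_stability :
    let E : Matrix (Fin 3) (Fin 3) ℝ := !![0, 1, 0; 0, 0, 1; -1, -1, -2]
    E.charpoly = X ^ 3 + C 2 * X ^ 2 + X + 1 ∧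
    (∃ lam₁ : ℝ, lam₁ ∈ Set.Ioo (-2 : ℝ) (-1.7) ∧ lam₁ ^ 3 + 2 * lam₁ ^ 2 + lam₁ + 1 = 0) ∧
    (∃ z : ℂ, z.im ≠ 0 ∧ z.re < 0 ∧ z ^ 3 + 2 * z ^ 2 + z + 1 = 0 ∧
      (starRingEnd ℂ z) ^ 3 + 2 * (starRingEnd ℂ z) ^ 2 + (starRingEnd ℂ z) + 1 = 0) ∧
    (∀ lam : ℂ, lam ^ 3 + 2 * lam ^ 2 + lam + 1 = 0 → 0.92 * Real.pi / 2 < |lam.arg|) := by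
  intro E
  -- real root via IVT
  obtain ⟨l, hl, hroot⟩ : ∃ l : ℝ, l ∈ Set.Ioo (-2 : ℝ) (-1.7) ∧ l ^ 3 + 2 * l ^ 2 + l + 1 = 0 := by
    have hcont : ContinuousOn (fun x : ℝ => x ^ 3 + 2 * x ^ 2 + x + 1) (Set.Icc (-2) (-1.7)) := by
      fun_prop
    have h := intermediate_value_Ioo (by norm_num : (-2 : ℝ) ≤ -1.7) hcont
    have h0 : (0 : ℝ) ∈ Set.Ioo ((-2:ℝ) ^ 3 + 2 * (-2:ℝ) ^ 2 + (-2:ℝ) + 1)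
        ((-1.7:ℝ) ^ 3 + 2 * (-1.7:ℝ) ^ 2 + (-1.7:ℝ) + 1) := by
      constructor <;> norm_num
    obtain ⟨l, hl, hl0⟩ := h h0
    exact ⟨l, hl, hl0⟩
  have hl1 : (-2 : ℝ) < l := hl.1
  have hl2 : l < -1.7 := hl.2
  set a : ℝ := -(2 + l) / 2 with ha
  have hdisc : 0 < (l + 1) ^ 2 - a ^ 2 := by nlinarith
  set t : ℝ := Real.sqrt ((l + 1) ^ 2 - a ^ 2) with htdef
  have ht2 : t ^ 2 = (l + 1) ^ 2 - a ^ 2 := Real.sq_sqrt hdisc.le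
  have htpos : 0 < t := Real.sqrt_pos.mpr hdisc
  set z : ℂ := ⟨a, t⟩ with hz
  have hzre : z.re = a := rfl
  have hzim : z.im = t := rfl
  have hconj : (starRingEnd ℂ) z = ⟨a, -t⟩ := rfl
  have hsumC : z + (starRingEnd ℂ) z = -(2 + (l : ℂ)) := by
    apply Complex.ext <;> simp [hz, hconj, ha]
  have hn : Complex.normSq z = (l + 1) ^ 2 := by
    rw [Complex.normSq_apply, hzre, hzim]; nlinarith [ht2]
  have hprodC : z * (starRingEnd ℂ) z = ((l : ℂ) + 1) ^ 2 := by
    rw [Complex.mul_conj, hn]; push_cast; ring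
  have hrootC : (l : ℂ) ^ 3 + 2 * (l : ℂ) ^ 2 + (l : ℂ) + 1 = 0 := by
    exact_mod_cast congrArg (Complex.ofReal) hroot
  have key : ∀ lam : ℂ, lam ^ 3 + 2 * lam ^ 2 + lam + 1 =
      (lam - l) * ((lam - z) * (lam - (starRingEnd ℂ) z)) := by
    intro lam
    linear_combination hrootC + (lam - (l : ℂ)) * lam * hsumC - (lam - (l : ℂ)) * hprodC
  have hzroot : z ^ 3 + 2 * z ^ 2 + z + 1 = 0 := by
    rw [key z]; ring
  have hczroot : (starRingEnd ℂ z) ^ 3 + 2 * (starRingEnd ℂ z) ^ 2 + (starRingEnd ℂ z) + 1 = 0 := by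
    rw [key]; ring
  refine ⟨?_, ⟨l, hl, hroot⟩, ⟨z, ?_, ?_, hzroot, hczroot⟩, ?_⟩
  · rw [Matrix.charpoly, Matrix.det_fin_three]
    simp [Matrix.charmatrix_apply, E]
    ring
  · simpa [hzim] using htpos.ne'
  · rw [hzre]; linarith
  · intro lam hlam
    have hre : lam.re < 0 := by
      have := (key lam).symm.trans hlam
      rcases mul_eq_zero.mp this with h | h
      · rw [sub_eq_zero.mp h, Complex.ofReal_re]; linarith
      · rcases mul_eq_zero.mp h with h | h
        · rw [sub_eq_zero.mp h, hzre]; linarith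
        · rw [sub_eq_zero.mp h, hconj]; show a < 0; linarith
    have h1 : Real.pi / 2 < |lam.arg| := by
      by_contra hc
      push_neg at hc
      exact absurd (Complex.abs_arg_le_pi_div_two_iff.mp hc) (by linarith)
    nlinarith [Real.pi_pos]
end

section
/- Every root λ ∈ ℂ of the polynomial P(λ) = λ²⁸ + 2λ¹⁹ + λ⁹ + 1 satisfies |arg(λ)| > π/20, where arg is the principal argument in (-π, π]. -/
open Complex Real

/-- For a complex number with positive real part and positive imaginary part,
adding `1` to the real part decreases the argument (weakly). -/
lemma arg_add_one_le {z : ℂ} (hre : 0 < z.re) (him : 0 < z.im) :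
    (z + 1).arg ≤ z.arg := by
  have him1 : 0 < (z + 1).im := by simpa using him
  have hz : z.arg = Real.arccos (z.re / ‖z‖) := Complex.arg_of_im_pos him
  have hz1 : (z + 1).arg = Real.arccos ((z + 1).re / ‖z + 1‖) :=
    Complex.arg_of_im_pos him1
  rw [hz, hz1]
  have habs : 0 < ‖z‖ := by
    apply norm_pos_iff.mpr; intro h; rw [h] at him; simp at him
  have habs1 : 0 < ‖z + 1‖ := by
    apply norm_pos_iff.mpr; intro h; rw [h] at him1; simp at him1
  have hsq : (‖z‖) ^ 2 = z.re ^ 2 + z.im ^ 2 := by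
    rw [Complex.sq_norm, Complex.normSq_apply]; ring
  have hsq1 : (‖z + 1‖) ^ 2 = (z.re + 1) ^ 2 + z.im ^ 2 := by
    rw [Complex.sq_norm, Complex.normSq_apply]; simp; ring
  have hre1 : (z + 1).re = z.re + 1 := by simp
  rw [hre1]
  -- key inequality: z.re / |z| ≤ (z.re + 1) / |z+1|
  have key : z.re / ‖z‖ ≤ (z.re + 1) / ‖z + 1‖ := by
    rw [div_le_div_iff₀ habs habs1]
    have hsqle : (z.re * ‖z + 1‖) ^ 2 ≤ ((z.re + 1) * ‖z‖) ^ 2 := by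
      nlinarith [mul_pos him him]
    have h1 : 0 ≤ (z.re + 1) * ‖z‖ := by positivity
    nlinarith [hsqle, h1, mul_pos hre habs1]
  rw [Real.arccos_eq_pi_div_two_sub_arcsin, Real.arccos_eq_pi_div_two_sub_arcsin]
  have := Real.monotone_arcsin key
  linarith

lemma key_lemma (lam : ℂ) (h : lam ^ 28 + 2 * lam ^ 19 + lam ^ 9 + 1 = 0)
    (hnn : 0 ≤ lam.arg) : Real.pi / 20 < lam.arg := by
  by_contra hcon
  push_neg at hcon
  have hpi := Real.pi_pos
  have hlam0 : lam ≠ 0 := by rintro rfl; simp at h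
  set θ := lam.arg with hθ
  set r := ‖lam‖ with hr
  have hrpos : 0 < r := norm_pos_iff.mpr hlam0
  -- case θ = 0
  rcases eq_or_lt_of_le hnn with h0 | hpos
  · -- lam is a nonneg real
    have := Complex.arg_eq_zero_iff.mp h0.symm
    obtain ⟨hre, him⟩ := this
    have hlam : lam = (lam.re : ℂ) := by
      apply Complex.ext <;> simp [him]
    rw [hlam] at h
    have : (lam.re ^ 28 + 2 * lam.re ^ 19 + lam.re ^ 9 + 1 : ℝ) = 0 := by
      exact_mod_cast h
    nlinarith [pow_nonneg hre 28, pow_nonneg hre 19, pow_nonneg hre 9]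
  -- now 0 < θ ≤ π/20
  have hθub : θ ≤ π / 20 := hcon
  have hpolar : (r : ℂ) * Complex.exp (θ * Complex.I) = lam :=
    Complex.norm_mul_exp_arg_mul_I lam
  -- w = lam ^ 9
  have h9 : lam ^ 9 = (r ^ 9 : ℝ) * Complex.exp ((9 * θ : ℝ) * Complex.I) := by
    rw [← hpolar, mul_pow, ← Complex.exp_nat_mul]
    push_cast
    ring_nf
  have h9θlt : 9 * θ < π / 2 := by linarith
  have h9θpos : 0 < 9 * θ := by linarith
  have hsin : 0 < Real.sin (9 * θ) :=
    Real.sin_pos_of_pos_of_lt_pi h9θpos (by linarith)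
  have hcos : 0 < Real.cos (9 * θ) :=
    Real.cos_pos_of_mem_Ioo ⟨by linarith, h9θlt⟩
  have him9 : (lam ^ 9).im = r ^ 9 * Real.sin (9 * θ) := by
    rw [h9]
    simp only [Complex.mul_im, Complex.ofReal_re, Complex.ofReal_im,
      Complex.exp_ofReal_mul_I_im, Complex.exp_ofReal_mul_I_re]
    ring
  have hre9 : (lam ^ 9).re = r ^ 9 * Real.cos (9 * θ) := by
    rw [h9]
    simp only [Complex.mul_re, Complex.ofReal_re, Complex.ofReal_im,
      Complex.exp_ofReal_mul_I_im, Complex.exp_ofReal_mul_I_re]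
    ring
  have hr9 : 0 < r ^ 9 := pow_pos hrpos 9
  have himpos : 0 < (lam ^ 9).im := by rw [him9]; positivity
  have hrepos : 0 < (lam ^ 9).re := by rw [hre9]; positivity
  -- w + 1 and w + 2
  have him1 : 0 < (lam ^ 9 + 1).im := by simpa using himpos
  have him2 : 0 < (lam ^ 9 + 2).im := by simpa using himpos
  have hre1 : 0 < (lam ^ 9 + 1).re := by simp; linarith
  have hre2 : 0 < (lam ^ 9 + 2).re := by simp; linarith
  have hne1 : lam ^ 9 + 1 ≠ 0 := by intro hh; rw [hh] at him1; simp at him1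
  have hne2 : lam ^ 9 + 2 ≠ 0 := by intro hh; rw [hh] at him2; simp at him2
  set α := (lam ^ 9 + 1).arg with hα
  set β := (lam ^ 9 + 2).arg with hβ
  have hα0 : 0 < α := by
    rw [hα, Complex.arg_of_im_pos him1]
    rw [Real.arccos_pos]
    have : (lam ^ 9 + 1).re < ‖lam ^ 9 + 1‖ := by
      have h1 : (lam ^ 9 + 1).re ≤ |(lam ^ 9 + 1).re| := le_abs_self _
      have h2 : |(lam ^ 9 + 1).re| < ‖lam ^ 9 + 1‖ := by
        have := Complex.abs_re_lt_norm (z := lam ^ 9 + 1)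
        apply this.mpr
        exact ne_of_gt him1
      linarith
    have habs : 0 < ‖lam ^ 9 + 1‖ := norm_pos_iff.mpr hne1
    rw [div_lt_one habs]
    exact this
  have hβ0 : 0 ≤ β := Complex.arg_nonneg_iff.mpr (le_of_lt him2)
  have hαlt : α < π / 2 := by
    have := Complex.abs_arg_lt_pi_div_two_iff.mpr (Or.inl hre1)
    calc α ≤ |α| := le_abs_self _
    _ < π / 2 := this
  have hβlt : β < π / 2 := by
    have := Complex.abs_arg_lt_pi_div_two_iff.mpr (Or.inl hre2)
    calc β ≤ |β| := le_abs_self _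
    _ < π / 2 := this
  -- β ≤ α
  have hβα : β ≤ α := by
    have : lam ^ 9 + 2 = (lam ^ 9 + 1) + 1 := by ring
    rw [hβ, hα, this]
    exact arg_add_one_le hre1 him1
  -- the factored equation
  have hkey : lam ^ 9 + 1 = -(lam * (lam ^ 9) ^ 2 * (lam ^ 9 + 2)) := by
    linear_combination h
  -- polar forms
  set s₁ := ‖lam ^ 9 + 1‖ with hs₁
  set s₂ := ‖lam ^ 9 + 2‖ with hs₂
  have hs₁pos : 0 < s₁ := norm_pos_iff.mpr hne1
  have hs₂pos : 0 < s₂ := norm_pos_iff.mpr hne2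
  have hp1 : (s₁ : ℂ) * Complex.exp (α * Complex.I) = lam ^ 9 + 1 :=
    Complex.norm_mul_exp_arg_mul_I _
  have hp2 : (s₂ : ℂ) * Complex.exp (β * Complex.I) = lam ^ 9 + 2 :=
    Complex.norm_mul_exp_arg_mul_I _
  -- moduli
  have habs_eq : s₁ = r ^ 19 * s₂ := by
    have h' := congrArg (fun x : ℂ => ‖x‖) hkey
    simp only [norm_neg, norm_mul, norm_pow, ← hr, ← hs₁, ← hs₂] at h'
    rw [h']; ring
  -- exp equation
  have hexp : Complex.exp ((α : ℂ) * Complex.I)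
      = Complex.exp (((19 * θ + β + π : ℝ) : ℂ) * Complex.I) := by
    have hrhs : -(lam * (lam ^ 9) ^ 2 * (lam ^ 9 + 2))
        = (r ^ 19 * s₂ : ℝ) * Complex.exp (((19 * θ + β + π : ℝ) : ℂ) * Complex.I) := by
      rw [← hp2, h9, ← hpolar]
      have hm1 : (-1 : ℂ) = Complex.exp ((π : ℂ) * Complex.I) := Complex.exp_pi_mul_I.symm
      have : Complex.exp (((19 * θ + β + π : ℝ) : ℂ) * Complex.I)
          = Complex.exp ((θ : ℂ) * Complex.I) * (Complex.exp (((9 * θ : ℝ) : ℂ) * Complex.I)) ^ 2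
            * Complex.exp ((β : ℂ) * Complex.I) * Complex.exp ((π : ℂ) * Complex.I) := by
        rw [← Complex.exp_nat_mul, ← Complex.exp_add, ← Complex.exp_add, ← Complex.exp_add]
        congr 1
        push_cast
        ring
      rw [this, ← hm1]
      push_cast
      ring
    have heq2 : (s₁ : ℂ) * Complex.exp ((α : ℂ) * Complex.I)
        = (r ^ 19 * s₂ : ℝ) * Complex.exp (((19 * θ + β + π : ℝ) : ℂ) * Complex.I) := by
      rw [hp1, hkey, hrhs]
    rw [habs_eq] at heq2
    have hne : ((r ^ 19 * s₂ : ℝ) : ℂ) ≠ 0 := by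
      have : (r ^ 19 * s₂ : ℝ) ≠ 0 := by positivity
      exact_mod_cast this
    exact mul_left_cancel₀ hne heq2
  -- extract integer relation
  obtain ⟨n, hn⟩ := Complex.exp_eq_exp_iff_exists_int.mp hexp
  have hreal : α = 19 * θ + β + π + n * (2 * π) := by
    have := congrArg Complex.im hn
    simpa [Complex.mul_im, Complex.add_im] using this
  -- pin n = -1
  have hn1 : n = -1 := by
    have h1 : (n : ℝ) * (2 * π) = α - (19 * θ + β + π) := by linarith
    have hub : (n : ℝ) * (2 * π) < -(π / 2) := by
      rw [h1]; linarith
    have hlb : -(2 * π) < (n : ℝ) * (2 * π) := by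
      rw [h1]
      have : 19 * θ ≤ 19 * (π / 20) := by linarith
      linarith
    have hn_lt : (n : ℝ) < 0 := by nlinarith
    have hn_gt : (-1 : ℝ) ≤ (n : ℝ) := by nlinarith
    have : (-1 : ℤ) ≤ n := by exact_mod_cast hn_gt
    have : n < 0 := by exact_mod_cast hn_lt
    omega
  rw [hn1] at hreal
  push_cast at hreal
  -- α = 19θ + β - π, with β ≤ α gives π ≤ 19θ ≤ 19π/20 < π
  have : π ≤ 19 * θ := by linarith
  linarith

theorem sprott_incommensurate_roots_stability :
    ∀ lam : ℂ, lam ^ 28 + 2 * lam ^ 19 + lam ^ 9 + 1 = 0 →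
      Real.pi / 20 < |lam.arg| := by
  intro lam h
  rcases le_or_gt 0 lam.arg with hnn | hneg
  · have := key_lemma lam h hnn
    rwa [_root_.abs_of_nonneg hnn]
  · set μ := (starRingEnd ℂ) lam with hμ
    have hμeq : μ ^ 28 + 2 * μ ^ 19 + μ ^ 9 + 1 = 0 := by
      have := congrArg (starRingEnd ℂ) h
      simpa [map_add, map_mul, map_pow, map_ofNat] using this
    have hargμ : μ.arg = -lam.arg := by
      rw [hμ, Complex.arg_conj]
      rw [if_neg]
      intro hc
      rw [hc] at hneg
      linarith [Real.pi_pos]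
    have hnn : 0 ≤ μ.arg := by rw [hargμ]; linarith
    have := key_lemma μ hμeq hnn
    rw [hargμ] at this
    rwa [_root_.abs_of_neg hneg]
end

section
/- If F : ℝ → Set ℝ is an upper semicontinuous set-valued map with nonempty compact convex values, then for every ε > 0 there exists a continuous function f : ℝ → ℝ such that for every x ∈ ℝ there exist x' ∈ ℝ and y' ∈ F(x') with |x - x'| ≤ ε and |f(x) - y'| ≤ ε, and f(x) lies in the convex hull of the image of F. -/
open Metric Set Function

theorem cellina_approximate_selection_one_dim
    (F : ℝ → Set ℝ)
    (husc : ∀ x₀ : ℝ, ∀ E : Set ℝ, IsOpen E → F x₀ ⊆ E →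
      ∃ U ∈ nhds x₀, ∀ x ∈ U, F x ⊆ E)
    (hval : ∀ x : ℝ, (F x).Nonempty ∧ IsCompact (F x) ∧ Convex ℝ (F x)) :
    ∀ ε : ℝ, 0 < ε → ∃ f : ℝ → ℝ, Continuous f ∧
      (∀ x : ℝ, ∃ x' y' : ℝ, y' ∈ F x' ∧ |x - x'| ≤ ε ∧ |f x - y'| ≤ ε) ∧
      (∀ x : ℝ, f x ∈ convexHull ℝ (⋃ y : ℝ, F y)) := by
  intro ε hε
  have hε2 : (0:ℝ) < ε / 2 := by linarith
  -- radius function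
  have key : ∀ i : ℝ, ∃ r : ℝ, 0 < r ∧ r ≤ ε ∧
      ∀ z ∈ Metric.ball i r, F z ⊆ thickening (ε/2) (F i) := by
    intro i
    obtain ⟨U, hU, hUF⟩ := husc i (thickening (ε/2) (F i)) isOpen_thickening
      (self_subset_thickening hε2 _)
    obtain ⟨r, hr0, hrU⟩ := Metric.mem_nhds_iff.mp hU
    refine ⟨min r ε, lt_min hr0 hε, min_le_right _ _, fun z hz => hUF z (hrU ?_)⟩
    exact Metric.ball_subset_ball (min_le_left _ _) hz
  choose r hr0 hrε hrF using key
  -- selection of points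
  have hsel : ∀ i : ℝ, ∃ y, y ∈ F i := fun i => (hval i).1
  choose y hy using hsel
  -- cover
  set W : ℝ → Set ℝ := fun i => Metric.ball i (r i / 2) with hW
  have hWo : ∀ i, IsOpen (W i) := fun i => Metric.isOpen_ball
  have hWc : (univ : Set ℝ) ⊆ ⋃ i, W i := fun x _ =>
    mem_iUnion.mpr ⟨x, Metric.mem_ball_self (by linarith [hr0 x])⟩
  obtain ⟨ρ, hρ⟩ := PartitionOfUnity.exists_isSubordinate isClosed_univ W hWo hWc
  refine ⟨fun x => ∑ᶠ i, ρ i x • y i, ?_, ?_, ?_⟩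
  · exact hρ.continuous_finsum_smul hWo fun i => continuousOn_const
  · intro x
    -- finsupport nonempty
    have hxu : x ∈ (univ : Set ℝ) := mem_univ x
    have hne : (ρ.finsupport x).Nonempty := by
      by_contra h
      rw [Finset.not_nonempty_iff_eq_empty] at h
      have := ρ.sum_finsupport hxu
      rw [h, Finset.sum_empty] at this
      norm_num at this
    obtain ⟨j, hj, hjmax⟩ := (ρ.finsupport x).exists_max_image r hne
    -- distances
    have hdist : ∀ i ∈ ρ.finsupport x, dist x i < r i / 2 := by
      intro i hi
      have : x ∈ tsupport (ρ i) := subset_closure ((ρ.mem_finsupport x).mp hi)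
      exact Metric.mem_ball.mp (hρ i this)
    have hxj : dist x j < r j / 2 := hdist j hj
    -- f x lies in the thickening of F j
    have hconv : Convex ℝ (thickening (ε/2) (F j)) := (hval j).2.2.thickening _
    have hmem : (∑ᶠ i, ρ i x • y i) ∈ thickening (ε/2) (F j) := by
      apply ρ.finsum_smul_mem_convex hxu _ hconv
      intro i hi
      have hi' : i ∈ ρ.finsupport x := (ρ.mem_finsupport x).mpr hi
      have hij : dist i j < r j := by
        have h1 := hdist i hi'
        have h2 := hjmax i hi'
        calc dist i j ≤ dist i x + dist x j := dist_triangle _ _ _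
          _ < r i / 2 + r j / 2 := by rw [dist_comm i x]; linarith
          _ ≤ r j := by linarith
      exact hrF j i (Metric.mem_ball.mpr hij) (hy i)
    obtain ⟨y', hy', hdy'⟩ := Metric.mem_thickening_iff.mp hmem
    refine ⟨j, y', hy', ?_, ?_⟩
    · have : dist x j ≤ ε := le_trans hxj.le (by linarith [hrε j])
      rwa [Real.dist_eq] at this
    · have : dist (∑ᶠ i, ρ i x • y i) y' ≤ ε := le_trans hdy'.le (by linarith)
      rwa [Real.dist_eq] at this
  · intro x
    apply ρ.finsum_smul_mem_convex (mem_univ x) _ (convex_convexHull ℝ _)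
    intro i _
    exact subset_convexHull ℝ _ (mem_iUnion.mpr ⟨i, hy i⟩)
end
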